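/- For every signified 2-dimensional grid (G, Σ), there exists a signified homomorphism from (G, Σ) to SP_9; consequently, the signified chromatic number of the class of 2-dimensional grids is at most 9. -/

import Mathlib

open Polynomial

/-- GF(9) constructed as GF(3)[x]/(x²+1). -/
abbrev F9 : Type := AdjoinRoot (X ^ 2 + 1 : (ZMod 3)[X])

/-- The class of the polynomial x. -/
noncomputable def ξ : F9 := AdjoinRoot.root _

/-- `a` is a nonzero square in GF(9). -/
def Sq (a : F9) : Prop := a ≠ 0 ∧ ∃ b : F9, b ^ 2 = a

abbrev V : Type := ZMod 3 × ZMod 3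

noncomputable def φ (p : V) : F9 :=
  AdjoinRoot.of _ p.1 + AdjoinRoot.of _ p.2 * ξ

lemma xi_sq : ξ ^ 2 = -1 := by
  have h : (AdjoinRoot.mk (X ^ 2 + 1 : (ZMod 3)[X])) (X ^ 2 + 1) = 0 :=
    AdjoinRoot.mk_self
  rw [map_add, map_pow, AdjoinRoot.mk_X, map_one] at h
  unfold ξ
  linear_combination h

lemma phi_surj : Function.Surjective φ := by
  intro z
  obtain ⟨p, rfl⟩ := AdjoinRoot.mk_surjective (g := (X ^ 2 + 1 : (ZMod 3)[X])) z
  have hm : (X ^ 2 + 1 : (ZMod 3)[X]).Monic := by monicity!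
  have hd : (X ^ 2 + 1 : (ZMod 3)[X]).degree = 2 := by compute_degree!
  have h1 : p %ₘ (X ^ 2 + 1) + (X ^ 2 + 1) * (p /ₘ (X ^ 2 + 1)) = p :=
    modByMonic_add_div p _
  set r := p %ₘ (X ^ 2 + 1 : (ZMod 3)[X]) with hr
  have hdeg : r.degree ≤ 1 := by
    have := degree_modByMonic_lt p hm
    rw [hd] at this
    exact Order.le_of_lt_succ (by exact_mod_cast this)
  obtain ⟨a, b, hab⟩ : ∃ a b, r = C b * X + C a :=
    ⟨r.coeff 0, r.coeff 1, eq_X_add_C_of_degree_le_one hdeg⟩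
  refine ⟨(a, b), ?_⟩
  have h2 : (AdjoinRoot.mk (X ^ 2 + 1 : (ZMod 3)[X])) p
      = (AdjoinRoot.mk (X ^ 2 + 1 : (ZMod 3)[X])) r := by
    rw [← h1, map_add, map_mul, AdjoinRoot.mk_self, zero_mul, add_zero]
  rw [h2, hab, map_add, map_mul, AdjoinRoot.mk_C, AdjoinRoot.mk_C, AdjoinRoot.mk_X]
  unfold φ ξ
  ring

lemma phi_zero (p : V) (h : φ p = 0) : p = 0 := by
  have hm : (X ^ 2 + 1 : (ZMod 3)[X]).Monic := by monicity!
  have hd : (X ^ 2 + 1 : (ZMod 3)[X]).degree = 2 := by compute_degree!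
  have hz : (AdjoinRoot.mk (X ^ 2 + 1 : (ZMod 3)[X])) (C p.1 + C p.2 * X) = 0 := by
    rw [map_add, map_mul, AdjoinRoot.mk_C, AdjoinRoot.mk_C, AdjoinRoot.mk_X]
    exact h
  rw [AdjoinRoot.mk_eq_zero] at hz
  have hq : (C p.1 + C p.2 * X : (ZMod 3)[X]) = 0 := by
    refine eq_zero_of_dvd_of_degree_lt hz ?_
    rw [hd]
    calc (C p.1 + C p.2 * X : (ZMod 3)[X]).degree
        ≤ max (C p.1 : (ZMod 3)[X]).degree (C p.2 * X : (ZMod 3)[X]).degree := degree_add_le _ _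
      _ ≤ 1 := max_le ((degree_C_le).trans (by norm_num)) (degree_C_mul_X_le _)
      _ < 2 := by norm_num
  have h0 : p.1 = 0 := by
    have := congrArg (fun q => Polynomial.coeff q 0) hq
    simpa using this
  have h1 : p.2 = 0 := by
    have := congrArg (fun q => Polynomial.coeff q 1) hq
    simpa using this
  exact Prod.ext h0 h1

lemma phi_sub (p q : V) : φ p - φ q = φ (p - q) := by
  unfold φ
  simp only [Prod.fst_sub, Prod.snd_sub, map_sub]
  ring

lemma phi_inj : Function.Injective φ := by
  intro p q h
  have h2 : φ p - φ q = 0 := by rw [h]; ring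
  rw [phi_sub] at h2
  have := phi_zero _ h2
  rwa [sub_eq_zero] at this

lemma phi_mul (p q : V) :
    φ p * φ q = φ (p.1 * q.1 - p.2 * q.2, p.1 * q.2 + p.2 * q.1) := by
  unfold φ
  simp only [map_sub, map_add, map_mul]
  linear_combination (AdjoinRoot.of (X ^ 2 + 1 : (ZMod 3)[X]) p.2 *
    AdjoinRoot.of (X ^ 2 + 1 : (ZMod 3)[X]) q.2) * xi_sq
def Sq2 (p : V) : Prop := p ≠ 0 ∧ (p.1 = 0 ∨ p.2 = 0)
instance : DecidablePred Sq2 := fun p => by unfold Sq2; infer_instance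

def Cond (b B x : V) (s t : Bool) : Prop :=
  (x - B ≠ 0 ∧ (Sq2 (x - B) ↔ t = true)) ∧
    ((x ≠ 0 ∧ (Sq2 x ↔ s = true)) ∨ (x - b ≠ 0 ∧ (Sq2 (x - b) ↔ s = true)))
instance (b B x : V) (s t : Bool) : Decidable (Cond b B x s t) := by
  unfold Cond; infer_instance

set_option maxRecDepth 100000 in
lemma key0 : ∀ (b B : V) (s t : Bool), b ≠ 0 →
    ∃ x1 x2 : V, x1 ≠ x2 ∧ Cond b B x1 s t ∧ Cond b B x2 s t := by decide

set_option maxRecDepth 100000 in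
lemma pair0 : ∀ (B : V) (t : Bool),
    ∃ x1 x2 : V, x1 ≠ x2 ∧
      (x1 - B ≠ 0 ∧ (Sq2 (x1 - B) ↔ t = true)) ∧
      (x2 - B ≠ 0 ∧ (Sq2 (x2 - B) ↔ t = true)) := by decide

lemma key (a b B : V) (s t : Bool) (hab : a ≠ b) :
    ∃ x1 x2 : V, x1 ≠ x2 ∧
      ((x1 ≠ B ∧ (Sq2 (x1 - B) ↔ t = true)) ∧
        ((x1 ≠ a ∧ (Sq2 (x1 - a) ↔ s = true)) ∨ (x1 ≠ b ∧ (Sq2 (x1 - b) ↔ s = true)))) ∧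
      ((x2 ≠ B ∧ (Sq2 (x2 - B) ↔ t = true)) ∧
        ((x2 ≠ a ∧ (Sq2 (x2 - a) ↔ s = true)) ∨ (x2 ≠ b ∧ (Sq2 (x2 - b) ↔ s = true)))) := by
  obtain ⟨x1, x2, h12, h1, h2⟩ := key0 (b - a) (B - a) s t (sub_ne_zero.mpr (Ne.symm hab))
  have conv : ∀ x : V, Cond (b - a) (B - a) x s t →
      ((x + a ≠ B ∧ (Sq2 ((x + a) - B) ↔ t = true)) ∧
        (((x + a) ≠ a ∧ (Sq2 ((x + a) - a) ↔ s = true)) ∨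
          ((x + a) ≠ b ∧ (Sq2 ((x + a) - b) ↔ s = true)))) := by
    intro x hx
    obtain ⟨⟨hB0, hBsq⟩, hor⟩ := hx
    have e1 : (x + a) - B = x - (B - a) := by ring
    have e2 : (x + a) - a = x := by ring
    have e3 : (x + a) - b = x - (b - a) := by ring
    refine ⟨⟨?_, by rw [e1]; exact hBsq⟩, ?_⟩
    · intro h; apply hB0; rw [← e1, h]; ring
    · rcases hor with ⟨h0, hsq⟩ | ⟨h0, hsq⟩
      · left
        exact ⟨by intro h; apply h0; rw [← e2, h]; ring, by rw [e2]; exact hsq⟩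
      · right
        refine ⟨by intro h; apply h0; rw [← e3, h]; ring, by rw [e3]; exact hsq⟩
  exact ⟨x1 + a, x2 + a, by simpa using h12, conv x1 h1, conv x2 h2⟩

lemma phi_zero_eq : φ 0 = 0 := by unfold φ; simp

lemma sq_aux1 : ∀ q : V, (q.1 * q.1 - q.2 * q.2 = 0) ∨ (q.1 * q.2 + q.2 * q.1 = 0) := by decide

lemma sq_aux2 : ∀ p : V, Sq2 p →
    ∃ q : V, (q.1 * q.1 - q.2 * q.2, q.1 * q.2 + q.2 * q.1) = p := by decide

lemma sq_iff (p : V) : Sq (φ p) ↔ Sq2 p := by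
  constructor
  · rintro ⟨hne, b, hb⟩
    obtain ⟨q, rfl⟩ := phi_surj b
    rw [pow_two, phi_mul] at hb
    have hp := phi_inj hb
    have hpne : p ≠ 0 := by
      rintro rfl
      exact hne phi_zero_eq
    refine ⟨hpne, ?_⟩
    rw [← hp]
    exact sq_aux1 q
  · rintro h
    obtain ⟨q, hq⟩ := sq_aux2 p h
    refine ⟨?_, φ q, ?_⟩
    · intro h0
      exact h.1 (phi_zero _ h0)
    · rw [pow_two, phi_mul, hq]

def RValid (r : ℕ → V) (sv sh : ℕ → Bool) (c : ℕ → V) (N : ℕ) : Prop :=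
  (∀ j ≤ N, c j ≠ r j ∧ (Sq2 (c j - r j) ↔ sv j = true)) ∧
  (∀ j < N, c j ≠ c (j + 1) ∧ (Sq2 (c (j + 1) - c j) ↔ sh j = true))

lemma rowPair (r : ℕ → V) (sv sh : ℕ → Bool) :
    ∀ N, ∃ c1 c2 : ℕ → V, c1 N ≠ c2 N ∧
      RValid r sv sh c1 N ∧ RValid r sv sh c2 N := by
  intro N
  induction N with
  | zero =>
    obtain ⟨x1, x2, h12, ⟨h1a, h1b⟩, ⟨h2a, h2b⟩⟩ := pair0 (r 0) (sv 0)
    have mk : ∀ x : V, x - r 0 ≠ 0 → (Sq2 (x - r 0) ↔ sv 0 = true) →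
        RValid r sv sh (fun _ => x) 0 := by
      intro x hx hsq
      constructor
      · intro j hj
        have : j = 0 := Nat.le_zero.mp hj
        subst this
        exact ⟨sub_ne_zero.mp hx, hsq⟩
      · intro j hj; omega
    exact ⟨fun _ => x1, fun _ => x2, h12, mk x1 h1a h1b, mk x2 h2a h2b⟩
  | succ N ih =>
    obtain ⟨c1, c2, hne, h1, h2⟩ := ih
    obtain ⟨x1, x2, hx, H1, H2⟩ := key (c1 N) (c2 N) (r (N + 1)) (sh N) (sv (N + 1)) hne
    have build2 : ∀ c : ℕ → V, RValid r sv sh c N → ∀ x : V,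
        (x ≠ r (N + 1) ∧ (Sq2 (x - r (N + 1)) ↔ sv (N + 1) = true)) →
        (x ≠ c N ∧ (Sq2 (x - c N) ↔ sh N = true)) →
        ∃ d : ℕ → V, d (N + 1) = x ∧ RValid r sv sh d (N + 1) := by
      intro c hc x hvert hhor
      refine ⟨fun j => if j = N + 1 then x else c j, by simp, ?_, ?_⟩
      · intro j hj
        by_cases hj1 : j = N + 1
        · subst hj1; simp only [if_pos rfl]; exact hvert
        · simp only [if_neg hj1]; exact hc.1 j (by omega)
      · intro j hj
        by_cases hj1 : j = N
        · have e1 : j ≠ N + 1 := by omega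
          have e2 : j + 1 = N + 1 := by omega
          simp only [if_neg e1, if_pos e2]
          rw [hj1]
          exact ⟨(hhor.1).symm, hhor.2⟩
        · have e1 : j ≠ N + 1 := by omega
          have e2 : j + 1 ≠ N + 1 := by omega
          simp only [if_neg e1, if_neg e2]
          exact hc.2 j (by omega)
    obtain ⟨HB1, Hor1⟩ := H1
    obtain ⟨HB2, Hor2⟩ := H2
    have D1 : ∃ d, d (N + 1) = x1 ∧ RValid r sv sh d (N + 1) := by
      rcases Hor1 with h | h
      · exact build2 c1 h1 x1 HB1 h
      · exact build2 c2 h2 x1 HB1 h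
    have D2 : ∃ d, d (N + 1) = x2 ∧ RValid r sv sh d (N + 1) := by
      rcases Hor2 with h | h
      · exact build2 c1 h1 x2 HB2 h
      · exact build2 c2 h2 x2 HB2 h
    obtain ⟨d1, hd1, hv1⟩ := D1
    obtain ⟨d2, hd2, hv2⟩ := D2
    exact ⟨d1, d2, by rw [hd1, hd2]; exact hx, hv1, hv2⟩

lemma rowExists (r : ℕ → V) (sv sh : ℕ → Bool) (N : ℕ) :
    ∃ c : ℕ → V, RValid r sv sh c N := by
  obtain ⟨c1, _, _, h1, _⟩ := rowPair r sv sh N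
  exact ⟨c1, h1⟩

lemma gridN (m n : ℕ) (sH sV : ℕ → ℕ → Bool) :
    ∃ c : ℕ → ℕ → V,
      (∀ i ≤ m, ∀ j < n, c i j ≠ c i (j + 1) ∧ (Sq2 (c i (j + 1) - c i j) ↔ sH i j = true)) ∧
      (∀ i < m, ∀ j ≤ n, c i j ≠ c (i + 1) j ∧ (Sq2 (c (i + 1) j - c i j) ↔ sV i j = true)) := by
  induction m with
  | zero =>
    obtain ⟨c0, h0⟩ := rowExists (fun _ => 0) (fun _ => true) (sH 0) n
    refine ⟨fun _ => c0, ?_, ?_⟩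
    · intro i hi j hj
      have : i = 0 := by omega
      subst this
      exact h0.2 j hj
    · intro i hi; omega
  | succ m ih =>
    obtain ⟨c, hH, hV⟩ := ih
    obtain ⟨d, hd⟩ := rowExists (c m) (fun j => sV m j) (fun j => sH (m + 1) j) n
    refine ⟨fun i => if i = m + 1 then d else c i, ?_, ?_⟩
    · intro i hi j hj
      by_cases h : i = m + 1
      · subst h; simp only [if_pos rfl]; exact hd.2 j hj
      · simp only [if_neg h]; exact hH i (by omega) j hj
    · intro i hi j hj
      by_cases h : i = m
      · have e1 : i ≠ m + 1 := by omega
        have e2 : i + 1 = m + 1 := by omega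
        simp only [if_neg e1, if_pos e2]
        rw [h]
        obtain ⟨ha, hb⟩ := hd.1 j hj
        exact ⟨ha.symm, hb⟩
      · have e1 : i ≠ m + 1 := by omega
        have e2 : i + 1 ≠ m + 1 := by omega
        simp only [if_neg e1, if_neg e2]
        exact hV i (by omega) j hj

/-- Theorem 1: every signified 2-dimensional grid admits a signified
homomorphism into SP₉ (a signed graph on 9 vertices); hence the signified
chromatic number of grids is at most 9. -/
theorem grids_to_SP9 :
    Nat.card F9 = 9 ∧
    ∀ (m n : ℕ) (σh : Fin (m + 1) → Fin n → Bool)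
      (σv : Fin m → Fin (n + 1) → Bool),
      ∃ c : Fin (m + 1) → Fin (n + 1) → F9,
        (∀ (i : Fin (m + 1)) (j : Fin n),
          c i j.castSucc ≠ c i j.succ ∧
          (Sq (c i j.succ - c i j.castSucc) ↔ σh i j = true)) ∧
        (∀ (i : Fin m) (j : Fin (n + 1)),
          c i.castSucc j ≠ c i.succ j ∧
          (Sq (c i.succ j - c i.castSucc j) ↔ σv i j = true)) := by
  constructor
  · have e : V ≃ F9 := Equiv.ofBijective φ ⟨phi_inj, phi_surj⟩
    rw [← Nat.card_congr e]
    simp [Nat.card_eq_fintype_card]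
  · intro m n σh σv
    set sH : ℕ → ℕ → Bool :=
      fun i j => if h : i < m + 1 ∧ j < n then σh ⟨i, h.1⟩ ⟨j, h.2⟩ else true with hsH
    set sV : ℕ → ℕ → Bool :=
      fun i j => if h : i < m ∧ j < n + 1 then σv ⟨i, h.1⟩ ⟨j, h.2⟩ else true with hsV
    obtain ⟨d, hH, hV⟩ := gridN m n sH sV
    refine ⟨fun i j => φ (d i.val j.val), ?_, ?_⟩
    · intro i j
      have hi : (i : ℕ) ≤ m := Nat.lt_succ_iff.mp i.isLt
      obtain ⟨hne, hsq⟩ := hH i.val hi j.val j.isLt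
      have hs : sH i.val j.val = σh i j := by
        rw [hsH]
        simp only []
        rw [dif_pos ⟨i.isLt, j.isLt⟩]
      constructor
      · simp only [Fin.coe_castSucc, Fin.val_succ]
        exact fun h => hne (phi_inj h)
      · simp only [Fin.coe_castSucc, Fin.val_succ]
        rw [phi_sub, sq_iff, hsq, hs]
    · intro i j
      have hj : (j : ℕ) ≤ n := Nat.lt_succ_iff.mp j.isLt
      obtain ⟨hne, hsq⟩ := hV i.val i.isLt j.val hj
      have hs : sV i.val j.val = σv i j := by
        rw [hsV]
        simp only []
        rw [dif_pos ⟨i.isLt, j.isLt⟩]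
      constructor
      · simp only [Fin.coe_castSucc, Fin.val_succ]
        exact fun h => hne (phi_inj h)
      · simp only [Fin.coe_castSucc, Fin.val_succ]
        rw [phi_sub, sq_iff, hsq, hs]
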